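/- Let k be an algebraically closed field of characteristic p, W = W(k), and let M be a free W-module of rank 2 with a σ-linear endomorphism F and σ^{−1}-linear endomorphism V satisfying FV = VF = p, dim_k M/FM = dim_k M/VM = 1. If F(M/pM) ≠ V(M/pM) (as subspaces of M/pM), then M has a W-basis e₁, e₂ with F e₁ = e₁, V e₁ = p e₁, F e₂ = p e₂, V e₂ = e₂. -/

import Mathlib

namespace Stmt11Aux

open WittVector

variable (p : ℕ) [Fact p.Prime] {k : Type*} [Field k] [IsAlgClosed k] [CharP k p]

local notation "W" => WittVector p k

lemma p_dvd_iff (x : W) : (p : W) ∣ x ↔ x.coeff 0 = 0 := by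
  constructor
  · rintro ⟨y, rfl⟩
    rw [mul_comm]
    exact mul_charP_coeff_zero y
  · intro hx
    have hxy : x = verschiebung (WittVector.mk p (fun i => x.coeff (i+1))) := by
      ext i
      cases i with
      | zero => rw [verschiebung_coeff_zero, hx]
      | succ n => rw [verschiebung_coeff_succ]; rfl
    set y : W := WittVector.mk p (fun i => x.coeff (i+1))
    refine ⟨(frobeniusEquiv p k).symm y, ?_⟩
    have h2 : WittVector.frobenius ((frobeniusEquiv p k).symm y) = y := by
      have := (frobeniusEquiv p k).apply_symm_apply y
      rwa [congrFun (frobeniusEquiv_apply p k) _] at this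
    rw [hxy]
    conv_lhs => rw [← h2]
    rw [verschiebung_frobenius, mul_comm]

lemma ppow_dvd_iff : ∀ (n : ℕ) (x : W), (p : W)^n ∣ x ↔ ∀ i < n, x.coeff i = 0
  | 0, x => by simp
  | (n+1), x => by
    constructor
    · rintro ⟨w, rfl⟩
      intro i hi
      have hz : (p:W)^(n+1) * w = ((p:W)^n * w) * p := by ring
      rw [hz]
      match i, hi with
      | 0, _ => exact mul_charP_coeff_zero _
      | (i+1), hi =>
        rw [mul_charP_coeff_succ]
        have : ((p:W)^n * w).coeff i = 0 :=
          ((ppow_dvd_iff n ((p:W)^n * w)).1 ⟨w, rfl⟩) i (by omega)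
        rw [this, zero_pow (Fact.out : p.Prime).ne_zero]
    · intro h
      obtain ⟨z, hz⟩ := (p_dvd_iff p x).2 (h 0 (Nat.succ_pos n))
      have hz' : x = z * p := by rw [hz, mul_comm]
      have hcz : ∀ i < n, z.coeff i = 0 := by
        intro i hi
        have h2 := h (i+1) (by omega)
        rw [hz', mul_charP_coeff_succ] at h2
        exact (pow_eq_zero_iff (Fact.out : p.Prime).ne_zero).1 h2
      obtain ⟨t, ht⟩ := (ppow_dvd_iff n z).2 hcz
      exact ⟨t, by rw [hz', ht]; ring⟩

lemma ppow_dvd_sub_iff (n : ℕ) (x y : W) :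
    (p : W)^n ∣ x - y ↔ ∀ i < n, x.coeff i = y.coeff i := by
  constructor
  · intro h i hi
    have h0 : x - y ∈ RingHom.ker (WittVector.truncate (p := p) n) :=
      (WittVector.mem_ker_truncate (p := p) (n := n) (x - y)).2 ((ppow_dvd_iff p n _).1 h)
    rw [RingHom.mem_ker, map_sub, sub_eq_zero] at h0
    have := congrArg (fun z => TruncatedWittVector.coeff ⟨i, hi⟩ z) h0
    simpa [WittVector.coeff_truncate] using this
  · intro h
    rw [ppow_dvd_iff]
    intro i hi
    refine (WittVector.mem_ker_truncate (p := p) (n := n) (x - y)).1 ?_ i hi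
    rw [RingHom.mem_ker, map_sub, sub_eq_zero]
    apply TruncatedWittVector.ext
    intro j
    rw [WittVector.coeff_truncate, WittVector.coeff_truncate]
    exact h j j.2

lemma exists_limit (u : ℕ → W) (h : ∀ n, (p:W)^(n+1) ∣ u (n+1) - u n) :
    ∃ L : W, ∀ n, (p:W)^n ∣ L - u n := by
  have chain : ∀ n m, n ≤ m → (p:W)^n ∣ u m - u n := by
    intro n m hnm
    induction m, hnm using Nat.le_induction with
    | base => simp
    | succ m hnm ih =>
      have he : u (m+1) - u n = (u (m+1) - u m) + (u m - u n) := by ring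
      rw [he]
      exact dvd_add (dvd_trans (pow_dvd_pow _ (by omega)) (h m)) ih
  refine ⟨WittVector.mk p (fun i => (u (i+1)).coeff i), ?_⟩
  intro n
  rw [ppow_dvd_sub_iff]
  intro i hi
  have h1 : (p:W)^(i+1) ∣ u n - u (i+1) := chain (i+1) n (by omega)
  have h2 := (ppow_dvd_sub_iff p (i+1) _ _).1 h1 i (by omega)
  show (u (i+1)).coeff i = (u n).coeff i
  exact h2.symm

lemma isUnit_iff (x : W) : IsUnit x ↔ x.coeff 0 ≠ 0 := by
  constructor
  · rintro ⟨v, rfl⟩ h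
    have h2 : ((v : W) * ((v⁻¹ : Wˣ) : W)).coeff 0 = 0 := by
      rw [mul_coeff_zero, h, zero_mul]
    rw [v.mul_inv] at h2
    simpa using h2
  · exact isUnit_of_coeff_zero_ne_zero x

lemma eq_zero_of_forall_ppow_dvd (x : W) (h : ∀ n, (p:W)^n ∣ x) : x = 0 := by
  ext i
  have := (ppow_dvd_iff p (i+1) x).1 (h (i+1)) i (by omega)
  simpa using this

lemma p_ne_zero : (p : W) ≠ 0 := (WittVector.irreducible p).ne_zero

lemma p_not_unit : ¬ IsUnit (p : W) := by
  rw [isUnit_iff]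
  simpa using coeff_p_zero (p := p) (R := k)

lemma exists_unit_frobenius_mul (lam : W) (hlam : IsUnit lam) :
    ∃ mu : W, IsUnit mu ∧ WittVector.frobenius mu * lam = mu := by
  have ha₁ : lam.coeff 0 ≠ 0 := (isUnit_iff p lam).1 hlam
  have ha₂ : (1 : W).coeff 0 ≠ 0 := by simp
  set b := frobeniusRotation p ha₁ ha₂ with hbdef
  have hb : WittVector.frobenius b * lam = b := by
    have := frobenius_frobeniusRotation p ha₁ ha₂
    rwa [mul_one] at this
  have hbne : b ≠ 0 := frobeniusRotation_nonzero p ha₁ ha₂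
  obtain ⟨m, c, hc0, hcm⟩ := exists_eq_pow_p_mul b hbne
  refine ⟨c, (isUnit_iff p c).2 hc0, ?_⟩
  have hfb : WittVector.frobenius ((p:W)^m * c) * lam = (p:W)^m * c := by rw [← hcm]; exact hb
  rw [map_mul, map_pow, map_natCast] at hfb
  have : (p:W)^m * (WittVector.frobenius c * lam) = (p:W)^m * c := by
    rw [← hfb]; ring
  exact mul_left_cancel₀ (pow_ne_zero m (p_ne_zero p)) this

lemma exists_unit_mul_eq_frobenius (lam : W) (hlam : IsUnit lam) :
    ∃ mu : W, IsUnit mu ∧ mu * lam = WittVector.frobenius mu := by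
  have ha₂ : lam.coeff 0 ≠ 0 := (isUnit_iff p lam).1 hlam
  have ha₁ : (1 : W).coeff 0 ≠ 0 := by simp
  set b := frobeniusRotation p ha₁ ha₂ with hbdef
  have hb : b * lam = WittVector.frobenius b := by
    have := frobenius_frobeniusRotation p ha₁ ha₂
    rw [mul_one] at this
    exact this.symm
  have hbne : b ≠ 0 := frobeniusRotation_nonzero p ha₁ ha₂
  obtain ⟨m, c, hc0, hcm⟩ := exists_eq_pow_p_mul b hbne
  refine ⟨c, (isUnit_iff p c).2 hc0, ?_⟩
  have hfb : ((p:W)^m * c) * lam = WittVector.frobenius ((p:W)^m * c) := by rw [← hcm]; exact hb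
  rw [map_mul, map_pow, map_natCast] at hfb
  have : (p:W)^m * (c * lam) = (p:W)^m * WittVector.frobenius c := by
    rw [← hfb]; ring
  exact mul_left_cancel₀ (pow_ne_zero m (p_ne_zero p)) this

lemma fixed_point (τ : W ≃+* W) (a bb c d : W) (ha : IsUnit a)
    (hb : (p:W) ∣ bb) (hc : (p:W) ∣ c) (hd : (p:W) ∣ d) :
    ∃ u : W, (p:W) ∣ u ∧ bb + τ u * d = (a + τ u * c) * u := by
  have hτ : ∀ (n : ℕ) (x : W), (p:W)^n ∣ x → (p:W)^n ∣ τ x := by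
    rintro n x ⟨y, rfl⟩
    exact ⟨τ y, by rw [map_mul, map_pow, map_natCast]⟩
  have hτ1 : ∀ (x : W), (p:W) ∣ x → (p:W) ∣ τ x := by
    intro x hx
    have := hτ 1 x (by rwa [pow_one]); rwa [pow_one] at this
  have hunit : ∀ u : W, IsUnit (a + τ u * c) := by
    intro u
    rw [isUnit_iff]
    have h1 : (a + τ u * c).coeff 0 = a.coeff 0 := by
      have h2 : (τ u * c).coeff 0 = 0 := (p_dvd_iff p _).1 (hc.mul_left _)
      have := add_coeff_zero a (τ u * c)
      rw [this, h2, add_zero]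
    rw [h1]
    exact (isUnit_iff p a).1 ha
  set Ψ : W → W := fun u => (bb + τ u * d) * Ring.inverse (a + τ u * c) with hΨ
  have key2 : ∀ u, (p:W) ∣ Ψ u := by
    intro u
    exact (dvd_add hb (hd.mul_left _)).mul_right _
  have key3 : ∀ u v (n : ℕ), (p:W)^n ∣ u - v → (p:W)^(n+1) ∣ Ψ u - Ψ v := by
    intro u v n huv
    have e1 : (a + τ u * c) * Ring.inverse (a + τ u * c) = 1 :=
      Ring.mul_inverse_cancel _ (hunit u)
    have e2 : (a + τ v * c) * Ring.inverse (a + τ v * c) = 1 :=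
      Ring.mul_inverse_cancel _ (hunit v)
    have key : Ψ u - Ψ v = ((a * d - bb * c) * (τ u - τ v)) *
        (Ring.inverse (a + τ u * c) * Ring.inverse (a + τ v * c)) := by
      show (bb + τ u * d) * Ring.inverse (a + τ u * c)
        - (bb + τ v * d) * Ring.inverse (a + τ v * c) = _
      linear_combination ((bb + τ v * d) * Ring.inverse (a + τ v * c)) * e1
        - ((bb + τ u * d) * Ring.inverse (a + τ u * c)) * e2
    rw [key]
    have d1 : (p:W) ∣ a * d - bb * c := dvd_sub (hd.mul_left a) (hc.mul_left bb)
    have d2 : (p:W)^n ∣ τ u - τ v := by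
      rw [← map_sub]; exact hτ n _ huv
    have : (p:W)^(n+1) ∣ (a * d - bb * c) * (τ u - τ v) := by
      rw [pow_succ']
      exact mul_dvd_mul d1 d2
    exact this.mul_right _
  set useq : ℕ → W := fun n => Nat.rec 0 (fun _ uu => Ψ uu) n with huseq
  have hseq0 : useq 0 = 0 := rfl
  have hseqS : ∀ n, useq (n+1) = Ψ (useq n) := fun n => rfl
  have hstep : ∀ n, (p:W)^(n+1) ∣ useq (n+1) - useq n := by
    intro n
    induction n with
    | zero =>
      show (p:W)^(0+1) ∣ Ψ 0 - 0
      rw [sub_zero, pow_one]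
      exact key2 0
    | succ n ih =>
      exact key3 (useq (n+1)) (useq n) (n+1) ih
  obtain ⟨L, hL⟩ := exists_limit p useq hstep
  have hpL : (p:W) ∣ L := by
    have h1 : (p:W) ∣ L - useq 1 := by
      have := hL 1; rwa [pow_one] at this
    have h2 : (p:W) ∣ useq 1 := key2 (useq 0)
    have : L = (L - useq 1) + useq 1 := by ring
    rw [this]; exact dvd_add h1 h2
  refine ⟨L, hpL, ?_⟩
  have hE : bb + τ L * d - (a + τ L * c) * L = 0 := by
    apply eq_zero_of_forall_ppow_dvd
    intro n
    have h1 : (p:W)^n ∣ L - useq n := hL n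
    have h2 : (p:W)^n ∣ L - useq (n+1) :=
      dvd_trans (pow_dvd_pow _ (by omega)) (hL (n+1))
    have hE' : bb + τ (useq n) * d - (a + τ (useq n) * c) * (useq (n+1)) = 0 := by
      have e1 : (a + τ (useq n) * c) * Ring.inverse (a + τ (useq n) * c) = 1 :=
        Ring.mul_inverse_cancel _ (hunit (useq n))
      show bb + τ (useq n) * d
        - (a + τ (useq n) * c) * ((bb + τ (useq n) * d) * Ring.inverse (a + τ (useq n) * c)) = 0
      linear_combination (-(bb + τ (useq n) * d)) * e1
    have decomp : bb + τ L * d - (a + τ L * c) * L =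
        (τ L - τ (useq n)) * d - a * (L - useq (n+1)) - c * (τ L * (L - useq (n+1)))
        - c * ((τ L - τ (useq n)) * useq (n+1))
        + (bb + τ (useq n) * d - (a + τ (useq n) * c) * useq (n+1)) := by ring
    rw [decomp, hE', add_zero]
    have dτ : (p:W)^n ∣ τ L - τ (useq n) := by rw [← map_sub]; exact hτ n _ h1
    exact dvd_sub (dvd_sub (dvd_sub (dτ.mul_right d) (h2.mul_left a))
      ((h2.mul_left (τ L)).mul_left c)) ((dτ.mul_right (useq (n+1))).mul_left c)
  exact sub_eq_zero.mp hE

lemma rank_one_fact {k' : Type*} [Field k'] (m00 m01 m10 m11 : k')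
    (hdet : m00 * m11 - m01 * m10 = 0)
    (hne : ¬ (m00 = 0 ∧ m01 = 0 ∧ m10 = 0 ∧ m11 = 0)) :
    ∃ w0 w1 r0 r1 : k', (w0 ≠ 0 ∨ w1 ≠ 0) ∧ (r0 ≠ 0 ∨ r1 ≠ 0) ∧
      m00 = w0 * r0 ∧ m01 = w0 * r1 ∧ m10 = w1 * r0 ∧ m11 = w1 * r1 := by
  by_cases h00 : m00 = 0
  · by_cases h01 : m01 = 0
    · by_cases h10 : m10 = 0
      · have h11 : m11 ≠ 0 := fun h => hne ⟨h00, h01, h10, h⟩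
        exact ⟨0, 1, 0, m11, Or.inr one_ne_zero, Or.inr h11,
          by rw [h00]; ring, by rw [h01]; ring, by rw [h10]; ring, by ring⟩
      · exact ⟨0, 1, m10, m11, Or.inr one_ne_zero, Or.inl h10,
          by rw [h00]; ring, by rw [h01]; ring, by ring, by ring⟩
    · have h10 : m10 = 0 := by
        have hmul : m01 * m10 = 0 := by linear_combination (-1 : k') * hdet + m11 * h00
        rcases mul_eq_zero.mp hmul with h | h
        · exact absurd h h01
        · exact h
      exact ⟨m01, m11, 0, 1, Or.inl h01, Or.inr one_ne_zero,
        by rw [h00]; ring, by ring, by rw [h10]; ring, by ring⟩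
  · refine ⟨m00, m10, 1, m01 / m00, Or.inl h00, Or.inl one_ne_zero, by ring, by field_simp, by ring, ?_⟩
    have h2 : m10 * (m01 / m00) = (m10 * m01) / m00 := by ring
    rw [h2, eq_div_iff h00]
    linear_combination hdet

noncomputable def lift0 (α : k) : W := WittVector.mk p (fun n => if n = 0 then α else 0)

lemma lift0_coeff (α : k) : (lift0 p α).coeff 0 = α := rfl

lemma eigen (τ : W ≃+* W) (A00 A01 A10 A11 P00 P01 P10 P11 : W)
    (ha : IsUnit (P11 * (A00 * τ P00 + A01 * τ P10) - P01 * (A10 * τ P00 + A11 * τ P10)))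
    (hb : (p:W) ∣ P00 * (A10 * τ P00 + A11 * τ P10) - P10 * (A00 * τ P00 + A01 * τ P10))
    (hc : (p:W) ∣ A00 * τ P01 + A01 * τ P11)
    (hd : (p:W) ∣ A10 * τ P01 + A11 * τ P11)
    (hP : IsUnit (P00 * P11 - P01 * P10)) :
    ∃ v0 v1 lam : W, IsUnit lam ∧
      A00 * τ v0 + A01 * τ v1 = lam * v0 ∧
      A10 * τ v0 + A11 * τ v1 = lam * v1 ∧
      (p:W) ∣ v0 - P00 ∧ (p:W) ∣ v1 - P10 := by
  obtain ⟨e, he⟩ := hP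
  have hinv : (P00 * P11 - P01 * P10) * ((e⁻¹ : Wˣ) : W) = 1 := by
    rw [← he]; exact e.mul_inv
  set inv : W := ((e⁻¹ : Wˣ) : W) with hinvdef
  have hinvU : IsUnit inv := Units.isUnit _
  obtain ⟨a, had⟩ : ∃ x : W, x = inv * (P11 * (A00 * τ P00 + A01 * τ P10)
      - P01 * (A10 * τ P00 + A11 * τ P10)) := ⟨_, rfl⟩
  obtain ⟨bb, hbd⟩ : ∃ x : W, x = inv * (P00 * (A10 * τ P00 + A11 * τ P10)
      - P10 * (A00 * τ P00 + A01 * τ P10)) := ⟨_, rfl⟩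
  obtain ⟨c, hcd⟩ : ∃ x : W, x = inv * (P11 * (A00 * τ P01 + A01 * τ P11)
      - P01 * (A10 * τ P01 + A11 * τ P11)) := ⟨_, rfl⟩
  obtain ⟨d, hdd⟩ : ∃ x : W, x = inv * (P00 * (A10 * τ P01 + A11 * τ P11)
      - P10 * (A00 * τ P01 + A01 * τ P11)) := ⟨_, rfl⟩
  have haU : IsUnit a := by rw [had]; exact hinvU.mul ha
  have hbD : (p:W) ∣ bb := by rw [hbd]; exact hb.mul_left inv
  have hcD : (p:W) ∣ c := by
    rw [hcd]
    exact (dvd_sub (hc.mul_left P11) (hd.mul_left P01)).mul_left inv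
  have hdD : (p:W) ∣ d := by
    rw [hdd]
    exact (dvd_sub (hd.mul_left P00) (hc.mul_left P10)).mul_left inv
  obtain ⟨u, hu, hufix⟩ := fixed_point p τ a bb c d haU hbD hcD hdD
  have hQ00 : A00 * τ P00 + A01 * τ P10 = P00 * a + P01 * bb := by
    linear_combination (-(A00 * τ P00 + A01 * τ P10)) * hinv - P00 * had - P01 * hbd
  have hQ10 : A10 * τ P00 + A11 * τ P10 = P10 * a + P11 * bb := by
    linear_combination (-(A10 * τ P00 + A11 * τ P10)) * hinv - P10 * had - P11 * hbd
  have hQ01 : A00 * τ P01 + A01 * τ P11 = P00 * c + P01 * d := by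
    linear_combination (-(A00 * τ P01 + A01 * τ P11)) * hinv - P00 * hcd - P01 * hdd
  have hQ11 : A10 * τ P01 + A11 * τ P11 = P10 * c + P11 * d := by
    linear_combination (-(A10 * τ P01 + A11 * τ P11)) * hinv - P10 * hcd - P11 * hdd
  refine ⟨P00 + P01 * u, P10 + P11 * u, a + τ u * c, ?_, ?_, ?_, ?_, ?_⟩
  · rw [isUnit_iff]
    have h2 : (τ u * c).coeff 0 = 0 := (p_dvd_iff p _).1 (hcD.mul_left _)
    have h1 : (a + τ u * c).coeff 0 = a.coeff 0 := by
      rw [add_coeff_zero, h2, add_zero]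
    rw [h1]
    exact (isUnit_iff p a).1 haU
  · rw [map_add, map_mul, map_add, map_mul]
    linear_combination hQ00 + τ u * hQ01 + P01 * hufix
  · rw [map_add, map_mul, map_add, map_mul]
    linear_combination hQ10 + τ u * hQ11 + P11 * hufix
  · have h3 : P00 + P01 * u - P00 = P01 * u := by ring
    rw [h3]; exact hu.mul_left P01
  · have h3 : P10 + P11 * u - P10 = P11 * u := by ring
    rw [h3]; exact hu.mul_left P11




end Stmt11Aux

set_option maxHeartbeats 2000000 in
open Stmt11Aux WittVector in
/-- ordinary case of the rank-2 classification: let `k` be algebraically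
closed of characteristic `p`, `W = W(k)` with Frobenius `σ`, and `M` a free `W`-module of
rank `2` with a `σ`-linear `F` and a `σ⁻¹`-linear `V` satisfying `FV = VF = p` and
`dim_k M/FM = dim_k M/VM = 1` (encoded as `M/FM ≅ M/VM ≅ W/pW`).  If
`F(M/pM) ≠ V(M/pM)`, then `M` has a `W`-basis `e₀, e₁` with `Fe₀ = e₀`, `Ve₀ = pe₀`,
`Fe₁ = pe₁`, `Ve₁ = e₁`. -/
theorem stmt11 (p : ℕ) [Fact p.Prime] (k : Type*) [Field k] [IsAlgClosed k] [CharP k p]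
    (M : Type*) [AddCommGroup M] [Module (WittVector p k) M]
    [Module.Free (WittVector p k) M] [Module.Finite (WittVector p k) M]
    (hrank : Module.finrank (WittVector p k) M = 2)
    (F V : M → M)
    (hFadd : ∀ x y, F (x + y) = F x + F y)
    (hFsmul : ∀ (a : WittVector p k) (x : M),
      F (a • x) = (WittVector.frobeniusEquiv p k a) • F x)
    (hVadd : ∀ x y, V (x + y) = V x + V y)
    (hVsmul : ∀ (a : WittVector p k) (x : M),
      V (a • x) = ((WittVector.frobeniusEquiv p k).symm a) • V x)
    (hFV : ∀ x, F (V x) = (p : WittVector p k) • x)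
    (hVF : ∀ x, V (F x) = (p : WittVector p k) • x)
    (hdimF : Nonempty ((M ⧸ Submodule.span (WittVector p k) (Set.range F)) ≃ₗ[WittVector p k]
      (WittVector p k ⧸ (Ideal.span {(p : WittVector p k)}))))
    (hdimV : Nonempty ((M ⧸ Submodule.span (WittVector p k) (Set.range V)) ≃ₗ[WittVector p k]
      (WittVector p k ⧸ (Ideal.span {(p : WittVector p k)}))))
    (hord : Submodule.span (WittVector p k) (Set.range F)
        ⊔ (Ideal.span {(p : WittVector p k)} • (⊤ : Submodule (WittVector p k) M))
      ≠ Submodule.span (WittVector p k) (Set.range V)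
        ⊔ (Ideal.span {(p : WittVector p k)} • (⊤ : Submodule (WittVector p k) M))) :
    ∃ bas : Module.Basis (Fin 2) (WittVector p k) M,
      F (bas 0) = bas 0 ∧ V (bas 0) = (p : WittVector p k) • bas 0 ∧
      F (bas 1) = (p : WittVector p k) • bas 1 ∧ V (bas 1) = bas 1 := by
  classical
  set σ : WittVector p k ≃+* WittVector p k := WittVector.frobeniusEquiv p k with hσdef
  set π : WittVector p k →+* k := WittVector.constantCoeff with hπdef
  have hπ0 : ∀ x : WittVector p k, π x = x.coeff 0 := fun _ => rfl
  have hσfr : ∀ t : WittVector p k, σ t = WittVector.frobenius t :=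
    congrFun (frobeniusEquiv_apply p k)
  have hπσ : ∀ t : WittVector p k, π (σ t) = (π t) ^ p := by
    intro t
    rw [hσfr t, hπ0, hπ0]
    simp
  have hππσi : ∀ t : WittVector p k, (π (σ.symm t)) ^ p = π t := by
    intro t
    rw [← hπσ]
    rw [RingEquiv.apply_symm_apply]
  have hπl : ∀ z : k, π (lift0 p z) = z := fun z => lift0_coeff p z
  have hπσl : ∀ z : k, π (σ (lift0 p z)) = z ^ p := by
    intro z
    rw [hπσ, hπl]
  have hπσil : ∀ z : k, π (σ.symm (σ (lift0 p z))) = z := by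
    intro z
    rw [RingEquiv.symm_apply_apply, hπl]
  have hpinj : ∀ a b : k, a ^ p = b ^ p → a = b := by
    intro a b h
    have h2 : (a - b) ^ p = 0 := by
      rw [sub_pow_char, h, sub_self]
    exact sub_eq_zero.mp (pow_eq_zero_iff (Fact.out : p.Prime).ne_zero |>.mp h2)
  have hπp : π ((p : ℕ) : WittVector p k) = 0 := by
    rw [map_natCast, CharP.cast_eq_zero]
  -- basis
  obtain ⟨b⟩ : Nonempty (Module.Basis (Fin 2) (WittVector p k) M) :=
    ⟨(Module.finBasis (WittVector p k) M).reindex (finCongr hrank)⟩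
  -- matrix entries of F and V
  have hFb0' : F (b 0) = b.repr (F (b 0)) 0 • b 0 + b.repr (F (b 0)) 1 • b 1 := by
    have h := b.sum_repr (F (b 0))
    rw [Fin.sum_univ_two] at h
    exact h.symm
  obtain ⟨A00, A10, hFb0⟩ : ∃ u v, F (b 0) = u • b 0 + v • b 1 := ⟨_, _, hFb0'⟩
  have hFb1' : F (b 1) = b.repr (F (b 1)) 0 • b 0 + b.repr (F (b 1)) 1 • b 1 := by
    have h := b.sum_repr (F (b 1))
    rw [Fin.sum_univ_two] at h
    exact h.symm
  obtain ⟨A01, A11, hFb1⟩ : ∃ u v, F (b 1) = u • b 0 + v • b 1 := ⟨_, _, hFb1'⟩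
  have hVb0' : V (b 0) = b.repr (V (b 0)) 0 • b 0 + b.repr (V (b 0)) 1 • b 1 := by
    have h := b.sum_repr (V (b 0))
    rw [Fin.sum_univ_two] at h
    exact h.symm
  obtain ⟨B00, B10, hVb0⟩ : ∃ u v, V (b 0) = u • b 0 + v • b 1 := ⟨_, _, hVb0'⟩
  have hVb1' : V (b 1) = b.repr (V (b 1)) 0 • b 0 + b.repr (V (b 1)) 1 • b 1 := by
    have h := b.sum_repr (V (b 1))
    rw [Fin.sum_univ_two] at h
    exact h.symm
  obtain ⟨B01, B11, hVb1⟩ : ∃ u v, V (b 1) = u • b 0 + v • b 1 := ⟨_, _, hVb1'⟩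
  -- semilinear formulas
  have hFm : ∀ y0 y1 : WittVector p k, F (y0 • b 0 + y1 • b 1) =
      (A00 * σ y0 + A01 * σ y1) • b 0 + (A10 * σ y0 + A11 * σ y1) • b 1 := by
    intro y0 y1
    rw [hFadd, hFsmul, hFsmul, hFb0, hFb1]
    module
  have hVm : ∀ y0 y1 : WittVector p k, V (y0 • b 0 + y1 • b 1) =
      (B00 * σ.symm y0 + B01 * σ.symm y1) • b 0 + (B10 * σ.symm y0 + B11 * σ.symm y1) • b 1 := by
    intro y0 y1
    rw [hVadd, hVsmul, hVsmul, hVb0, hVb1]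
    module
  -- coordinate extraction
  have hco : ∀ s t s' t' : WittVector p k,
      s • b 0 + t • b 1 = s' • b 0 + t' • b 1 → s = s' ∧ t = t' := by
    intro s t s' t' h
    have h0 := congrArg (fun z => b.repr z 0) h
    have h1 := congrArg (fun z => b.repr z 1) h
    simp only [map_add, map_smul, Module.Basis.repr_self, Finsupp.add_apply, Finsupp.smul_apply,
      Finsupp.single_apply, smul_eq_mul] at h0 h1
    norm_num at h0 h1
    exact ⟨h0, h1⟩
  -- the eight structure equations
  have hFV0 := hFV (b 0)
  rw [hVb0, hFm] at hFV0
  obtain ⟨e1a, e1b⟩ := hco _ _ _ _ (hFV0.trans (by rw [zero_smul, add_zero] :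
    (p : WittVector p k) • b 0 = (p : WittVector p k) • b 0 + (0 : WittVector p k) • b 1))
  have hFV1 := hFV (b 1)
  rw [hVb1, hFm] at hFV1
  obtain ⟨e1c, e1d⟩ := hco _ _ _ _ (hFV1.trans (by rw [zero_smul, zero_add] :
    (p : WittVector p k) • b 1 = (0 : WittVector p k) • b 0 + (p : WittVector p k) • b 1))
  have hVF0 := hVF (b 0)
  rw [hFb0, hVm] at hVF0
  obtain ⟨e2a, e2b⟩ := hco _ _ _ _ (hVF0.trans (by rw [zero_smul, add_zero] :
    (p : WittVector p k) • b 0 = (p : WittVector p k) • b 0 + (0 : WittVector p k) • b 1))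
  have hVF1 := hVF (b 1)
  rw [hFb1, hVm] at hVF1
  obtain ⟨e2c, e2d⟩ := hco _ _ _ _ (hVF1.trans (by rw [zero_smul, zero_add] :
    (p : WittVector p k) • b 1 = (0 : WittVector p k) • b 0 + (p : WittVector p k) • b 1))
  -- determinant relation
  have hdet2 : (A00 * A11 - A01 * A10) * (σ B00 * σ B11 - σ B01 * σ B10)
      = (p : WittVector p k) * (p : WittVector p k) := by
    linear_combination (A10 * σ B01 + A11 * σ B11) * e1a + (p : WittVector p k) * e1d
      - (A10 * σ B00 + A11 * σ B10) * e1c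
  -- Fp is not a unit
  have hpnu : ¬ IsUnit ((p : ℕ) : WittVector p k) := p_not_unit p
  -- span range F is a submodule spanned by F b0, F b1, and is not top
  have hspan_ne : ∀ (G : M → M),
      Nonempty ((M ⧸ Submodule.span (WittVector p k) (Set.range G)) ≃ₗ[WittVector p k]
        (WittVector p k ⧸ (Ideal.span {(p : WittVector p k)}))) →
      Submodule.span (WittVector p k) (Set.range G) ≠ ⊤ := by
    rintro G ⟨e⟩ htop
    have h1 : Subsingleton (M ⧸ Submodule.span (WittVector p k) (Set.range G)) :=
      Submodule.Quotient.subsingleton_iff.mpr htop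
    have h2 : Subsingleton (WittVector p k ⧸ (Ideal.span {(p : WittVector p k)})) :=
      @Equiv.subsingleton _ _ (e.symm.toEquiv) h1
    have h3 : Ideal.span {(p : WittVector p k)} = ⊤ :=
      Submodule.Quotient.subsingleton_iff.mp h2
    exact hpnu (by rwa [Ideal.span_singleton_eq_top] at h3)
  -- det A is not a unit
  have hdAnu : ¬ IsUnit (A00 * A11 - A01 * A10) := by
    intro hu
    apply hspan_ne F hdimF
    rw [eq_top_iff, ← b.span_eq]
    apply Submodule.span_le.2
    rintro _ ⟨j, rfl⟩
    obtain ⟨e, he⟩ := hu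
    have hinv : (A00 * A11 - A01 * A10) * ((e⁻¹ : (WittVector p k)ˣ) : WittVector p k) = 1 := by
      rw [← he]; exact e.mul_inv
    set i : WittVector p k := ((e⁻¹ : (WittVector p k)ˣ) : WittVector p k) with hidef
    fin_cases j
    · refine Submodule.subset_span ⟨σ.symm (i * A11) • b 0 + σ.symm (-(i * A10)) • b 1, ?_⟩
      rw [hFm, RingEquiv.apply_symm_apply, RingEquiv.apply_symm_apply]
      have c1 : A00 * (i * A11) + A01 * (-(i * A10)) = 1 := by linear_combination hinv
      have c2 : A10 * (i * A11) + A11 * (-(i * A10)) = 0 := by ring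
      rw [c1, c2, one_smul, zero_smul, add_zero]
      rfl
    · refine Submodule.subset_span ⟨σ.symm (-(i * A01)) • b 0 + σ.symm (i * A00) • b 1, ?_⟩
      rw [hFm, RingEquiv.apply_symm_apply, RingEquiv.apply_symm_apply]
      have c1 : A00 * (-(i * A01)) + A01 * (i * A00) = 0 := by ring
      have c2 : A10 * (-(i * A01)) + A11 * (i * A00) = 1 := by linear_combination hinv
      rw [c1, c2, one_smul, zero_smul, zero_add]
      rfl
  have hdBnu : ¬ IsUnit (B00 * B11 - B01 * B10) := by
    intro hu
    apply hspan_ne V hdimV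
    rw [eq_top_iff, ← b.span_eq]
    apply Submodule.span_le.2
    rintro _ ⟨j, rfl⟩
    obtain ⟨e, he⟩ := hu
    have hinv : (B00 * B11 - B01 * B10) * ((e⁻¹ : (WittVector p k)ˣ) : WittVector p k) = 1 := by
      rw [← he]; exact e.mul_inv
    set i : WittVector p k := ((e⁻¹ : (WittVector p k)ˣ) : WittVector p k) with hidef
    fin_cases j
    · refine Submodule.subset_span ⟨σ (i * B11) • b 0 + σ (-(i * B10)) • b 1, ?_⟩
      rw [hVm, RingEquiv.symm_apply_apply, RingEquiv.symm_apply_apply]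
      have c1 : B00 * (i * B11) + B01 * (-(i * B10)) = 1 := by linear_combination hinv
      have c2 : B10 * (i * B11) + B11 * (-(i * B10)) = 0 := by ring
      rw [c1, c2, one_smul, zero_smul, add_zero]
      rfl
    · refine Submodule.subset_span ⟨σ (-(i * B01)) • b 0 + σ (i * B00) • b 1, ?_⟩
      rw [hVm, RingEquiv.symm_apply_apply, RingEquiv.symm_apply_apply]
      have c1 : B00 * (-(i * B01)) + B01 * (i * B00) = 0 := by ring
      have c2 : B10 * (-(i * B01)) + B11 * (i * B00) = 1 := by linear_combination hinv
      rw [c1, c2, one_smul, zero_smul, zero_add]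
      rfl
  -- p divides both determinants, and the cofactors are units
  have hpdA : ((p : ℕ) : WittVector p k) ∣ (A00 * A11 - A01 * A10) := by
    rw [p_dvd_iff]
    by_contra h
    exact hdAnu (isUnit_of_coeff_zero_ne_zero _ h)
  have hpdB : ((p : ℕ) : WittVector p k) ∣ (B00 * B11 - B01 * B10) := by
    rw [p_dvd_iff]
    by_contra h
    exact hdBnu (isUnit_of_coeff_zero_ne_zero _ h)
  obtain ⟨a', ha'd⟩ := hpdA
  obtain ⟨b', hb'd⟩ := hpdB
  have hp0 : ((p : ℕ) : WittVector p k) ≠ 0 := p_ne_zero p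
  have hkey : a' * σ b' = 1 := by
    have hσdB : σ B00 * σ B11 - σ B01 * σ B10 = (p : WittVector p k) * σ b' := by
      rw [← map_mul, ← map_mul, ← map_sub, hb'd, map_mul, map_natCast]
    apply mul_left_cancel₀ (mul_ne_zero hp0 hp0)
    rw [mul_one]
    linear_combination hdet2 - (σ B00 * σ B11 - σ B01 * σ B10) * ha'd
      - ((p : WittVector p k) * a') * hσdB
  have ha'U : IsUnit a' := IsUnit.of_mul_eq_one _ hkey
  have hb'U : IsUnit b' := by
    have h1 : IsUnit (σ b') := IsUnit.of_mul_eq_one _ (by rw [mul_comm]; exact hkey)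
    have h2 := h1.map σ.symm
    rwa [RingEquiv.symm_apply_apply] at h2
  -- mod-p matrices are nonzero with zero determinant
  have hAbar : ¬ (π A00 = 0 ∧ π A01 = 0 ∧ π A10 = 0 ∧ π A11 = 0) := by
    rintro ⟨h1, h2, h3, h4⟩
    obtain ⟨a0, ha0⟩ := (p_dvd_iff p A00).2 h1
    obtain ⟨a1, ha1⟩ := (p_dvd_iff p A01).2 h2
    obtain ⟨a2, ha2⟩ := (p_dvd_iff p A10).2 h3
    obtain ⟨a3, ha3⟩ := (p_dvd_iff p A11).2 h4
    have h5 : a' = (p : WittVector p k) * (a0 * a3 - a1 * a2) := by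
      apply mul_left_cancel₀ hp0
      linear_combination -ha'd + A11 * ha0 + (p : WittVector p k) * a0 * ha3
        - A10 * ha1 - (p : WittVector p k) * a1 * ha2
    rw [h5] at ha'U
    exact hpnu (isUnit_of_mul_isUnit_left ha'U)
  have hBbar : ¬ (π B00 = 0 ∧ π B01 = 0 ∧ π B10 = 0 ∧ π B11 = 0) := by
    rintro ⟨h1, h2, h3, h4⟩
    obtain ⟨a0, ha0⟩ := (p_dvd_iff p B00).2 h1
    obtain ⟨a1, ha1⟩ := (p_dvd_iff p B01).2 h2
    obtain ⟨a2, ha2⟩ := (p_dvd_iff p B10).2 h3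
    obtain ⟨a3, ha3⟩ := (p_dvd_iff p B11).2 h4
    have h5 : b' = (p : WittVector p k) * (a0 * a3 - a1 * a2) := by
      apply mul_left_cancel₀ hp0
      linear_combination -hb'd + B11 * ha0 + (p : WittVector p k) * a0 * ha3
        - B10 * ha1 - (p : WittVector p k) * a1 * ha2
    rw [h5] at hb'U
    exact hpnu (isUnit_of_mul_isUnit_left hb'U)
  have hdetA0 : π A00 * π A11 - π A01 * π A10 = 0 := by
    have h := congrArg π ha'd
    rw [map_sub, map_mul, map_mul, map_mul, hπp, zero_mul] at h
    exact h
  have hdetB0 : π B00 * π B11 - π B01 * π B10 = 0 := by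
    have h := congrArg π hb'd
    rw [map_sub, map_mul, map_mul, map_mul, hπp, zero_mul] at h
    exact h
  -- rank-one factorisations
  obtain ⟨w0, w1, r0, r1, hw, hr, hA00, hA01, hA10, hA11⟩ :=
    rank_one_fact (π A00) (π A01) (π A10) (π A11) hdetA0 hAbar
  obtain ⟨x0, x1, q0, q1, hx, hq, hB00, hB01, hB10, hB11⟩ :=
    rank_one_fact (π B00) (π B01) (π B10) (π B11) hdetB0 hBbar
  -- helper: three memberships
  have hexp : ∀ m : M, m = b.repr m 0 • b 0 + b.repr m 1 • b 1 := by
    intro m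
    have h := b.sum_repr m
    rw [Fin.sum_univ_two] at h
    exact h.symm
  have hmemp : ∀ c0 c1 : WittVector p k, π c0 = 0 → π c1 = 0 →
      c0 • b 0 + c1 • b 1 ∈
        (Ideal.span {(p : WittVector p k)} • (⊤ : Submodule (WittVector p k) M)) := by
    intro c0 c1 h0 h1
    obtain ⟨d0, hd0⟩ := (p_dvd_iff p c0).2 h0
    obtain ⟨d1, hd1⟩ := (p_dvd_iff p c1).2 h1
    have hz : c0 • b 0 + c1 • b 1 = (p : WittVector p k) • (d0 • b 0 + d1 • b 1) := by
      rw [hd0, hd1, smul_add, smul_smul, smul_smul]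
    rw [hz]
    exact Submodule.smul_mem_smul (Ideal.subset_span (Set.mem_singleton _)) trivial
  -- independence of the two mod-p lines
  have hdep : w0 * x1 - w1 * x0 ≠ 0 := by
    intro hdep0
    apply hord
    obtain ⟨δ, hδ0, hδw0, hδw1⟩ : ∃ δ : k, δ ≠ 0 ∧ w0 = δ * x0 ∧ w1 = δ * x1 := by
      rcases hx with hx0 | hx1
      · have hw0 : w0 ≠ 0 := by
          intro h
          rcases hw with h' | h'
          · exact h' h
          · apply h'
            have : w1 * x0 = 0 := by linear_combination -hdep0 + x1 * h
            rcases mul_eq_zero.mp this with h'' | h''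
            · exact h''
            · exact absurd h'' hx0
        refine ⟨w0 / x0, div_ne_zero hw0 hx0, by field_simp, ?_⟩
        rw [div_mul_eq_mul_div, eq_div_iff hx0]
        linear_combination -hdep0
      · have hw1 : w1 ≠ 0 := by
          intro h
          rcases hw with h' | h'
          · apply h'
            have : w0 * x1 = 0 := by linear_combination hdep0 + x0 * h
            rcases mul_eq_zero.mp this with h'' | h''
            · exact h''
            · exact absurd h'' hx1
          · exact h' h
        refine ⟨w1 / x1, div_ne_zero hw1 hx1, ?_, by field_simp⟩
        rw [div_mul_eq_mul_div, eq_div_iff hx1]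
        linear_combination hdep0
    have hFtoV : ∀ m : M, F m ∈ Submodule.span (WittVector p k) (Set.range V)
        ⊔ (Ideal.span {(p : WittVector p k)} • (⊤ : Submodule (WittVector p k) M)) := by
      intro m
      have hFm' : F m = (A00 * σ (b.repr m 0) + A01 * σ (b.repr m 1)) • b 0
          + (A10 * σ (b.repr m 0) + A11 * σ (b.repr m 1)) • b 1 := by
        conv_lhs => rw [hexp m]
        rw [hFm]
      obtain ⟨t0, t1, htq⟩ : ∃ t0 t1 : k,
          q0 * t0 + q1 * t1 = δ * (r0 * (π (b.repr m 0))^p + r1 * (π (b.repr m 1))^p) := by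
        rcases hq with h | h
        · exact ⟨(δ * (r0 * (π (b.repr m 0))^p + r1 * (π (b.repr m 1))^p)) / q0, 0, by
            field_simp; ring⟩
        · exact ⟨0, (δ * (r0 * (π (b.repr m 0))^p + r1 * (π (b.repr m 1))^p)) / q1, by
            field_simp; ring⟩
      set mV : M := (σ (lift0 p t0)) • b 0 + (σ (lift0 p t1)) • b 1 with hmV
      have hVmV : V mV = (B00 * σ.symm (σ (lift0 p t0)) + B01 * σ.symm (σ (lift0 p t1))) • b 0
          + (B10 * σ.symm (σ (lift0 p t0)) + B11 * σ.symm (σ (lift0 p t1))) • b 1 := hVm _ _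
      have hsplit : F m = V mV +
          (((A00 * σ (b.repr m 0) + A01 * σ (b.repr m 1))
            - (B00 * σ.symm (σ (lift0 p t0)) + B01 * σ.symm (σ (lift0 p t1)))) • b 0
          + ((A10 * σ (b.repr m 0) + A11 * σ (b.repr m 1))
            - (B10 * σ.symm (σ (lift0 p t0)) + B11 * σ.symm (σ (lift0 p t1)))) • b 1) := by
        rw [hFm', hVmV]
        module
      rw [hsplit]
      apply Submodule.add_mem
      · exact Submodule.mem_sup_left (Submodule.subset_span ⟨mV, rfl⟩)
      · apply Submodule.mem_sup_right
        apply hmemp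
        · rw [map_sub, map_add, map_add, map_mul, map_mul, map_mul, map_mul,
            hπσ, hπσ, hπσil, hπσil, hA00, hA01, hB00, hB01]
          linear_combination (-x0) * htq
            + (r0 * (π (b.repr m 0))^p + r1 * (π (b.repr m 1))^p) * hδw0
        · rw [map_sub, map_add, map_add, map_mul, map_mul, map_mul, map_mul,
            hπσ, hπσ, hπσil, hπσil, hA10, hA11, hB10, hB11]
          linear_combination (-x1) * htq
            + (r0 * (π (b.repr m 0))^p + r1 * (π (b.repr m 1))^p) * hδw1
    have hVtoF : ∀ m : M, V m ∈ Submodule.span (WittVector p k) (Set.range F)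
        ⊔ (Ideal.span {(p : WittVector p k)} • (⊤ : Submodule (WittVector p k) M)) := by
      intro m
      have hVm' : V m = (B00 * σ.symm (b.repr m 0) + B01 * σ.symm (b.repr m 1)) • b 0
          + (B10 * σ.symm (b.repr m 0) + B11 * σ.symm (b.repr m 1)) • b 1 := by
        conv_lhs => rw [hexp m]
        rw [hVm]
      obtain ⟨t0, t1, htr⟩ : ∃ t0 t1 : k,
          r0 * t0^p + r1 * t1^p
          = (q0 * (π (σ.symm (b.repr m 0))) + q1 * (π (σ.symm (b.repr m 1)))) / δ := by
        rcases hr with h | h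
        · obtain ⟨z, hz⟩ := IsAlgClosed.exists_pow_nat_eq
            ((q0 * (π (σ.symm (b.repr m 0))) + q1 * (π (σ.symm (b.repr m 1)))) / δ / r0)
            (n := p) (Fact.out : p.Prime).pos
          exact ⟨z, 0, by
            rw [hz, zero_pow (Fact.out : p.Prime).ne_zero, mul_zero, add_zero]
            field_simp
            try ring⟩
        · obtain ⟨z, hz⟩ := IsAlgClosed.exists_pow_nat_eq
            ((q0 * (π (σ.symm (b.repr m 0))) + q1 * (π (σ.symm (b.repr m 1)))) / δ / r1)
            (n := p) (Fact.out : p.Prime).pos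
          exact ⟨0, z, by
            rw [hz, zero_pow (Fact.out : p.Prime).ne_zero, mul_zero, zero_add]
            field_simp
            try ring⟩
      set mF : M := (lift0 p t0) • b 0 + (lift0 p t1) • b 1 with hmF
      have hFmF : F mF = (A00 * σ (lift0 p t0) + A01 * σ (lift0 p t1)) • b 0
          + (A10 * σ (lift0 p t0) + A11 * σ (lift0 p t1)) • b 1 := hFm _ _
      have hsplit : V m = F mF +
          (((B00 * σ.symm (b.repr m 0) + B01 * σ.symm (b.repr m 1))
            - (A00 * σ (lift0 p t0) + A01 * σ (lift0 p t1))) • b 0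
          + ((B10 * σ.symm (b.repr m 0) + B11 * σ.symm (b.repr m 1))
            - (A10 * σ (lift0 p t0) + A11 * σ (lift0 p t1))) • b 1) := by
        rw [hVm', hFmF]
        module
      rw [hsplit]
      apply Submodule.add_mem
      · exact Submodule.mem_sup_left (Submodule.subset_span ⟨mF, rfl⟩)
      · apply Submodule.mem_sup_right
        apply hmemp
        · rw [map_sub, map_add, map_add, map_mul, map_mul, map_mul, map_mul,
            hπσl, hπσl, hB00, hB01, hA00, hA01]
          have h8 : (r0 * t0^p + r1 * t1^p) * δ
              = q0 * (π (σ.symm (b.repr m 0))) + q1 * (π (σ.symm (b.repr m 1))) := by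
            rw [htr, div_mul_cancel₀ _ hδ0]
          linear_combination (-x0) * h8 - (r0 * t0^p + r1 * t1^p) * hδw0
        · rw [map_sub, map_add, map_add, map_mul, map_mul, map_mul, map_mul,
            hπσl, hπσl, hB10, hB11, hA10, hA11]
          have h8 : (r0 * t0^p + r1 * t1^p) * δ
              = q0 * (π (σ.symm (b.repr m 0))) + q1 * (π (σ.symm (b.repr m 1))) := by
            rw [htr, div_mul_cancel₀ _ hδ0]
          linear_combination (-x1) * h8 - (r0 * t0^p + r1 * t1^p) * hδw1
    exact le_antisymm
      (sup_le (Submodule.span_le.2 (by rintro _ ⟨m, rfl⟩; exact hFtoV m)) le_sup_right)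
      (sup_le (Submodule.span_le.2 (by rintro _ ⟨m, rfl⟩; exact hVtoF m)) le_sup_right)
  -- p-th roots
  obtain ⟨w0', hw0'⟩ := IsAlgClosed.exists_pow_nat_eq w0 (n := p) (Fact.out : p.Prime).pos
  obtain ⟨w1', hw1'⟩ := IsAlgClosed.exists_pow_nat_eq w1 (n := p) (Fact.out : p.Prime).pos
  obtain ⟨x0', hx0'⟩ := IsAlgClosed.exists_pow_nat_eq x0 (n := p) (Fact.out : p.Prime).pos
  obtain ⟨x1', hx1'⟩ := IsAlgClosed.exists_pow_nat_eq x1 (n := p) (Fact.out : p.Prime).pos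
  obtain ⟨r0', hr0'⟩ := IsAlgClosed.exists_pow_nat_eq r0 (n := p) (Fact.out : p.Prime).pos
  obtain ⟨r1', hr1'⟩ := IsAlgClosed.exists_pow_nat_eq r1 (n := p) (Fact.out : p.Prime).pos
  have hnegpow : ∀ z : k, (-z)^p = -(z^p) := by
    intro z
    have h : ((0:k) - z)^p = (0:k)^p - z^p := by rw [sub_pow_char]
    simpa [zero_pow (Fact.out : p.Prime).ne_zero] using h
  -- the mod-p values of σ.symm applied to the entries of A
  have hσiA00 : π (σ.symm A00) = w0' * r0' := by
    apply hpinj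
    rw [hππσi, hA00, mul_pow, hw0', hr0']
  have hσiA10 : π (σ.symm A10) = w1' * r0' := by
    apply hpinj
    rw [hππσi, hA10, mul_pow, hw1', hr0']
  have hσiA01 : π (σ.symm A01) = w0' * r1' := by
    apply hpinj
    rw [hππσi, hA01, mul_pow, hw0', hr1']
  have hσiA11 : π (σ.symm A11) = w1' * r1' := by
    apply hpinj
    rw [hππσi, hA11, mul_pow, hw1', hr1']
  -- key relation 1 : r ⟂ x^p
  have hrx : r0 * x0^p + r1 * x1^p = 0 := by
    have g1 : w0 * q0^p * (r0 * x0^p + r1 * x1^p) = 0 := by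
      have h := congrArg π e1a
      rw [map_add, map_mul, map_mul, hπσ, hπσ, hπp, hA00, hA01, hB00, hB10,
        mul_pow, mul_pow] at h
      linear_combination h
    have g2 : w1 * q0^p * (r0 * x0^p + r1 * x1^p) = 0 := by
      have h := congrArg π e1b
      rw [map_add, map_mul, map_mul, hπσ, hπσ, map_zero, hA10, hA11, hB00, hB10,
        mul_pow, mul_pow] at h
      linear_combination h
    have g3 : w0 * q1^p * (r0 * x0^p + r1 * x1^p) = 0 := by
      have h := congrArg π e1c
      rw [map_add, map_mul, map_mul, hπσ, hπσ, map_zero, hA00, hA01, hB01, hB11,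
        mul_pow, mul_pow] at h
      linear_combination h
    have g4 : w1 * q1^p * (r0 * x0^p + r1 * x1^p) = 0 := by
      have h := congrArg π e1d
      rw [map_add, map_mul, map_mul, hπσ, hπσ, hπp, hA10, hA11, hB01, hB11,
        mul_pow, mul_pow] at h
      linear_combination h
    have hcancel : ∀ (wi qj : k), wi ≠ 0 → qj ≠ 0 →
        wi * qj^p * (r0 * x0^p + r1 * x1^p) = 0 → r0 * x0^p + r1 * x1^p = 0 := by
      intro wi qj hwi hqj hg
      rcases mul_eq_zero.mp hg with h | h
      · exact absurd h (mul_ne_zero hwi (pow_ne_zero _ hqj))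
      · exact h
    rcases hw with hw' | hw' <;> rcases hq with hq' | hq'
    · exact hcancel _ _ hw' hq' g1
    · exact hcancel _ _ hw' hq' g3
    · exact hcancel _ _ hw' hq' g2
    · exact hcancel _ _ hw' hq' g4
  -- key relation 2 : q ⟂ w^{1/p}
  have hqw : q0 * w0' + q1 * w1' = 0 := by
    have g1 : x0 * r0' * (q0 * w0' + q1 * w1') = 0 := by
      have h := congrArg π e2a
      rw [map_add, map_mul, map_mul, hπp, hσiA00, hσiA10, hB00, hB01] at h
      linear_combination h
    have g2 : x1 * r0' * (q0 * w0' + q1 * w1') = 0 := by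
      have h := congrArg π e2b
      rw [map_add, map_mul, map_mul, map_zero, hσiA00, hσiA10, hB10, hB11] at h
      linear_combination h
    have g3 : x0 * r1' * (q0 * w0' + q1 * w1') = 0 := by
      have h := congrArg π e2c
      rw [map_add, map_mul, map_mul, map_zero, hσiA01, hσiA11, hB00, hB01] at h
      linear_combination h
    have g4 : x1 * r1' * (q0 * w0' + q1 * w1') = 0 := by
      have h := congrArg π e2d
      rw [map_add, map_mul, map_mul, hπp, hσiA01, hσiA11, hB10, hB11] at h
      linear_combination h
    have hr0'ne : r0 ≠ 0 → r0' ≠ 0 := by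
      intro h h'
      exact h (by rw [← hr0', h', zero_pow (Fact.out : p.Prime).ne_zero])
    have hr1'ne : r1 ≠ 0 → r1' ≠ 0 := by
      intro h h'
      exact h (by rw [← hr1', h', zero_pow (Fact.out : p.Prime).ne_zero])
    have hcancel : ∀ (xi rj : k), xi ≠ 0 → rj ≠ 0 →
        xi * rj * (q0 * w0' + q1 * w1') = 0 → q0 * w0' + q1 * w1' = 0 := by
      intro xi rj hxi hrj hg
      rcases mul_eq_zero.mp hg with h | h
      · exact absurd h (mul_ne_zero hxi hrj)
      · exact h
    rcases hx with hx' | hx' <;> rcases hr with hr' | hr'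
    · exact hcancel _ _ hx' (hr0'ne hr') g1
    · exact hcancel _ _ hx' (hr1'ne hr') g3
    · exact hcancel _ _ hx' (hr0'ne hr') g2
    · exact hcancel _ _ hx' (hr1'ne hr') g4
  -- the two nonvanishing quantities
  have hcA : r0 * w0^p + r1 * w1^p ≠ 0 := by
    intro h0
    have hdet' : w0^p * x1^p - w1^p * x0^p ≠ 0 := by
      intro hd
      apply hdep
      apply hpinj _ 0
      rw [sub_pow_char, mul_pow, mul_pow, hd, zero_pow (Fact.out : p.Prime).ne_zero]
    have h1 : r0 * (w0^p * x1^p - w1^p * x0^p) = 0 := by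
      linear_combination x1^p * h0 - w1^p * hrx
    have h2 : r1 * (w0^p * x1^p - w1^p * x0^p) = 0 := by
      linear_combination (-(x0^p)) * h0 + w0^p * hrx
    have hr0z : r0 = 0 := by
      rcases mul_eq_zero.mp h1 with h | h
      · exact h
      · exact absurd h hdet'
    have hr1z : r1 = 0 := by
      rcases mul_eq_zero.mp h2 with h | h
      · exact h
      · exact absurd h hdet'
    rcases hr with h | h
    · exact h hr0z
    · exact h hr1z
  have hcV : q0 * x0' + q1 * x1' ≠ 0 := by
    intro h0
    have hdet' : w0' * x1' - w1' * x0' ≠ 0 := by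
      intro hd
      apply hdep
      have hpows : w0 * x1 - w1 * x0 = (w0' * x1' - w1' * x0')^p := by
        rw [sub_pow_char, mul_pow, mul_pow, hw0', hx1', hw1', hx0']
      rw [hpows, hd, zero_pow (Fact.out : p.Prime).ne_zero]
    have h1 : q0 * (w0' * x1' - w1' * x0') = 0 := by
      linear_combination x1' * hqw - w1' * h0
    have h2 : q1 * (w0' * x1' - w1' * x0') = 0 := by
      linear_combination (-(x0')) * hqw + w0' * h0
    have hq0z : q0 = 0 := by
      rcases mul_eq_zero.mp h1 with h | h
      · exact h
      · exact absurd h hdet'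
    have hq1z : q1 = 0 := by
      rcases mul_eq_zero.mp h2 with h | h
      · exact h
      · exact absurd h hdet'
    rcases hq with h | h
    · exact h hq0z
    · exact h hq1z
  have hcA'' : r0' * w0 + r1' * w1 ≠ 0 := by
    intro h0
    apply hcA
    have : (r0' * w0 + r1' * w1)^p = r0 * w0^p + r1 * w1^p := by
      rw [add_pow_char, mul_pow, mul_pow, hr0', hr1']
    rw [← this, h0, zero_pow (Fact.out : p.Prime).ne_zero]
  have hcVp : q0^p * x0 + q1^p * x1 ≠ 0 := by
    intro h0
    apply hcV
    have : (q0 * x0' + q1 * x1')^p = q0^p * x0 + q1^p * x1 := by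
      rw [add_pow_char, mul_pow, mul_pow, hx0', hx1']
    apply hpinj _ 0
    rw [this, h0, zero_pow (Fact.out : p.Prime).ne_zero]
  -- F-side eigenvector
  obtain ⟨v0, v1, lam, hlamU, heqF0, heqF1, hv0p, hv1p⟩ :=
    eigen p σ A00 A01 A10 A11 (lift0 p w0) (lift0 p r1') (lift0 p w1) (lift0 p (-r0'))
      (by
        rw [isUnit_iff]
        have hval : π (lift0 p (-r0') * (A00 * σ (lift0 p w0) + A01 * σ (lift0 p w1))
            - lift0 p r1' * (A10 * σ (lift0 p w0) + A11 * σ (lift0 p w1)))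
            = -((r0' * w0 + r1' * w1) * (r0 * w0^p + r1 * w1^p)) := by
          rw [map_sub, map_mul, map_mul, map_add, map_add, map_mul, map_mul, map_mul, map_mul,
            hπσl, hπσl, hπl, hπl, hA00, hA01, hA10, hA11]
          ring
        rw [← hπ0, hval]
        exact neg_ne_zero.2 (mul_ne_zero hcA'' hcA))
      (by
        rw [p_dvd_iff, ← hπ0]
        rw [map_sub, map_mul, map_mul, map_add, map_add, map_mul, map_mul, map_mul, map_mul,
          hπσl, hπσl, hπl, hπl, hA00, hA01, hA10, hA11]
        ring)
      (by
        rw [p_dvd_iff, ← hπ0]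
        rw [map_add, map_mul, map_mul, hπσl, hπσl, hA00, hA01, hnegpow, hr0', hr1']
        ring)
      (by
        rw [p_dvd_iff, ← hπ0]
        rw [map_add, map_mul, map_mul, hπσl, hπσl, hA10, hA11, hnegpow, hr0', hr1']
        ring)
      (by
        rw [isUnit_iff]
        have hval : π (lift0 p w0 * lift0 p (-r0') - lift0 p r1' * lift0 p w1)
            = -(r0' * w0 + r1' * w1) := by
          rw [map_sub, map_mul, map_mul, hπl, hπl, hπl, hπl]
          ring
        rw [← hπ0, hval]
        exact neg_ne_zero.2 hcA'')
  have hπv0 : π v0 = w0 := by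
    have h0 : π (v0 - lift0 p w0) = 0 := (p_dvd_iff p _).1 hv0p
    rw [map_sub, hπl] at h0
    exact sub_eq_zero.mp h0
  have hπv1 : π v1 = w1 := by
    have h0 : π (v1 - lift0 p w1) = 0 := (p_dvd_iff p _).1 hv1p
    rw [map_sub, hπl] at h0
    exact sub_eq_zero.mp h0
  -- V-side eigenvector
  obtain ⟨v'0, v'1, lam', hlam'U, heqV0, heqV1, hv'0p, hv'1p⟩ :=
    eigen p σ.symm B00 B01 B10 B11 (σ (lift0 p x0')) (σ (lift0 p q1))
      (σ (lift0 p x1')) (σ (lift0 p (-q0)))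
      (by
        rw [isUnit_iff]
        have hval : π (σ (lift0 p (-q0)) * (B00 * σ.symm (σ (lift0 p x0'))
              + B01 * σ.symm (σ (lift0 p x1')))
            - σ (lift0 p q1) * (B10 * σ.symm (σ (lift0 p x0'))
              + B11 * σ.symm (σ (lift0 p x1'))))
            = -((q0^p * x0 + q1^p * x1) * (q0 * x0' + q1 * x1')) := by
          rw [map_sub, map_mul, map_mul, map_add, map_add, map_mul, map_mul, map_mul, map_mul,
            hπσil, hπσil, hπσl, hπσl, hB00, hB01, hB10, hB11, hnegpow]
          ring
        rw [← hπ0, hval]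
        exact neg_ne_zero.2 (mul_ne_zero hcVp hcV))
      (by
        rw [p_dvd_iff, ← hπ0]
        rw [map_sub, map_mul, map_mul, map_add, map_add, map_mul, map_mul, map_mul, map_mul,
          hπσil, hπσil, hπσl, hπσl, hB00, hB01, hB10, hB11, hx0', hx1']
        ring)
      (by
        rw [p_dvd_iff, ← hπ0]
        rw [map_add, map_mul, map_mul, hπσil, hπσil, hB00, hB01]
        ring)
      (by
        rw [p_dvd_iff, ← hπ0]
        rw [map_add, map_mul, map_mul, hπσil, hπσil, hB10, hB11]
        ring)
      (by
        rw [isUnit_iff]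
        have hval : π (σ (lift0 p x0') * σ (lift0 p (-q0))
            - σ (lift0 p q1) * σ (lift0 p x1'))
            = -(q0^p * x0 + q1^p * x1) := by
          rw [map_sub, map_mul, map_mul, hπσl, hπσl, hπσl, hπσl, hnegpow, hx0', hx1']
          ring
        rw [← hπ0, hval]
        exact neg_ne_zero.2 hcVp)
  have hπv'0 : π v'0 = x0 := by
    have h0 : π (v'0 - σ (lift0 p x0')) = 0 := (p_dvd_iff p _).1 hv'0p
    rw [map_sub, hπσl, hx0'] at h0
    exact sub_eq_zero.mp h0
  have hπv'1 : π v'1 = x1 := by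
    have h0 : π (v'1 - σ (lift0 p x1')) = 0 := (p_dvd_iff p _).1 hv'1p
    rw [map_sub, hπσl, hx1'] at h0
    exact sub_eq_zero.mp h0
  -- scalar corrections
  obtain ⟨μ, hμU, hμ⟩ := exists_unit_frobenius_mul p lam hlamU
  have hμ' : σ μ * lam = μ := by rw [hσfr]; exact hμ
  obtain ⟨β, hβU, hβ⟩ := exists_unit_mul_eq_frobenius p lam' hlam'U
  set ν : WittVector p k := σ β with hνdef
  have hν : σ.symm ν * lam' = ν := by
    rw [hνdef, RingEquiv.symm_apply_apply, hσfr]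
    exact hβ
  have hνU : IsUnit ν := hβU.map σ
  -- the fixed vectors in M
  have hc0 : A00 * σ (μ * v0) + A01 * σ (μ * v1) = μ * v0 := by
    rw [map_mul, map_mul]
    linear_combination σ μ * heqF0 + v0 * hμ'
  have hc1 : A10 * σ (μ * v0) + A11 * σ (μ * v1) = μ * v1 := by
    rw [map_mul, map_mul]
    linear_combination σ μ * heqF1 + v1 * hμ'
  have hFe0 : F ((μ * v0) • b 0 + (μ * v1) • b 1) = (μ * v0) • b 0 + (μ * v1) • b 1 := by
    rw [hFm, hc0, hc1]
  have hd0 : B00 * σ.symm (ν * v'0) + B01 * σ.symm (ν * v'1) = ν * v'0 := by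
    rw [map_mul, map_mul]
    linear_combination σ.symm ν * heqV0 + v'0 * hν
  have hd1 : B10 * σ.symm (ν * v'0) + B11 * σ.symm (ν * v'1) = ν * v'1 := by
    rw [map_mul, map_mul]
    linear_combination σ.symm ν * heqV1 + v'1 * hν
  have hVe1 : V ((ν * v'0) • b 0 + (ν * v'1) • b 1) = (ν * v'0) • b 0 + (ν * v'1) • b 1 := by
    rw [hVm, hd0, hd1]
  -- the basis
  set C : Matrix (Fin 2) (Fin 2) (WittVector p k) :=
    !![μ * v0, ν * v'0; μ * v1, ν * v'1] with hCdef
  have hdetC : IsUnit C.det := by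
    rw [hCdef, Matrix.det_fin_two_of, isUnit_iff, ← hπ0]
    rw [map_sub, map_mul, map_mul, map_mul, map_mul, map_mul, map_mul,
      hπv0, hπv1, hπv'0, hπv'1]
    have hπμ : π μ ≠ 0 := (isUnit_iff p μ).1 hμU
    have hπν : π ν ≠ 0 := (isUnit_iff p ν).1 hνU
    intro h0
    apply hdep
    have h1 : π μ * π ν * (w0 * x1 - w1 * x0) = 0 := by linear_combination h0
    rcases mul_eq_zero.mp h1 with h | h
    · exact absurd h (mul_ne_zero hπμ hπν)
    · exact h
  set bas : Module.Basis (Fin 2) (WittVector p k) M := b.map (Matrix.toLinearEquiv b C hdetC)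
    with hbasdef
  have hbas0 : bas 0 = (μ * v0) • b 0 + (μ * v1) • b 1 := by
    rw [hbasdef, Module.Basis.map_apply, Matrix.toLinearEquiv_apply, Matrix.toLin_self]
    rw [Fin.sum_univ_two, hCdef]
    simp
  have hbas1 : bas 1 = (ν * v'0) • b 0 + (ν * v'1) • b 1 := by
    rw [hbasdef, Module.Basis.map_apply, Matrix.toLinearEquiv_apply, Matrix.toLin_self]
    rw [Fin.sum_univ_two, hCdef]
    simp
  refine ⟨bas, ?_, ?_, ?_, ?_⟩
  · rw [hbas0]
    exact hFe0
  · rw [hbas0]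
    have h := hVF ((μ * v0) • b 0 + (μ * v1) • b 1)
    rwa [hFe0] at h
  · rw [hbas1]
    have h := hFV ((ν * v'0) • b 0 + (ν * v'1) • b 1)
    rwa [hVe1] at h
  · rw [hbas1]
    exact hVe1
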